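/- Suppose 5β + 2λ < 1, β < 1/20. In the sparsified graph G̃ (obtained from G by deleting all edges whose endpoints are not in agreement, then deleting all edges between two light vertices), if u and v are two heavy vertices in the same connected component of G̃, then dist_{G̃}(u, v) ≤ 2. -/

import Mathlib

open Finset Classical

set_option maxHeartbeats 1000000

noncomputable section

variable {V : Type*} [Fintype V] [DecidableEq V]

/-- Closed neighborhood of `v` in `G` (each vertex is its own neighbor). -/
def closedNbhd (G : SimpleGraph V) (v : V) : Finset V :=
  insert v (G.neighborFinset v)

/-- Degree `d(v) = |N(v)|` (closed neighborhoods). -/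
def deg (G : SimpleGraph V) (v : V) : ℕ := (closedNbhd G v).card

/-- `u` and `v` are in agreement: `|N(u) △ N(v)| < β·max(d(u), d(v))`. -/
def Agree (β : ℝ) (G : SimpleGraph V) (u v : V) : Prop :=
  ((symmDiff (closedNbhd G u) (closedNbhd G v)).card : ℝ)
    < β * max (deg G u : ℝ) (deg G v : ℝ)

/-- The graph after Line 1: discard all edges whose endpoints are not in agreement. -/
def agreeGraph (β : ℝ) (G : SimpleGraph V) : SimpleGraph V where
  Adj u v := G.Adj u v ∧ Agree β G u v
  symm := by
    constructor
    intro a b h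
    refine ⟨h.1.symm, ?_⟩
    have := h.2
    unfold Agree at *
    rwa [symmDiff_comm, max_comm] at this
  loopless := ⟨fun a h => G.loopless.irrefl a h.1⟩

/-- A vertex is light if it lost more than a `λ`-fraction of its neighbors
when passing from `G` to the agreement graph. -/
def Light (β lam : ℝ) (G : SimpleGraph V) (v : V) : Prop :=
  (deg G v : ℝ) - (deg (agreeGraph β G) v : ℝ) > lam * (deg G v : ℝ)

/-- A vertex is heavy if it is not light. -/
def Heavy (β lam : ℝ) (G : SimpleGraph V) (v : V) : Prop := ¬ Light β lam G v

/-- The sparsified graph `G̃`: additionally discard all edges between two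
light vertices. -/
def sparsified (β lam : ℝ) (G : SimpleGraph V) : SimpleGraph V where
  Adj u v := (agreeGraph β G).Adj u v ∧ (Heavy β lam G u ∨ Heavy β lam G v)
  symm := ⟨fun a b h => ⟨h.1.symm, h.2.symm⟩⟩
  loopless := ⟨fun a h => (agreeGraph β G).loopless.irrefl a h.1⟩

/- ### Auxiliary lemmas -/

lemma mem_closedNbhd {G : SimpleGraph V} {a x : V} :
    x ∈ closedNbhd G a ↔ x = a ∨ G.Adj a x := by simp [closedNbhd]

lemma self_mem_closedNbhd (G : SimpleGraph V) (a : V) : a ∈ closedNbhd G a :=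
  mem_closedNbhd.mpr (Or.inl rfl)

lemma one_le_deg (G : SimpleGraph V) (a : V) : 1 ≤ deg G a :=
  Finset.card_pos.mpr ⟨a, self_mem_closedNbhd G a⟩

lemma closedNbhd_subset {G H : SimpleGraph V} (h : ∀ x y, H.Adj x y → G.Adj x y) (a : V) :
    closedNbhd H a ⊆ closedNbhd G a := by
  intro x hx
  rcases mem_closedNbhd.mp hx with rfl | hadj
  · exact self_mem_closedNbhd G x
  · exact mem_closedNbhd.mpr (Or.inr (h _ _ hadj))

lemma deg_le_of_sdiff (G : SimpleGraph V) (a b : V) :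
    deg G b ≤ deg G a + (symmDiff (closedNbhd G a) (closedNbhd G b)).card := by
  have hsub : closedNbhd G b ⊆ closedNbhd G a ∪ symmDiff (closedNbhd G a) (closedNbhd G b) := by
    intro x hx
    by_cases h : x ∈ closedNbhd G a
    · exact mem_union_left _ h
    · exact mem_union_right _ (by rw [Finset.mem_symmDiff]; right; exact ⟨hx, h⟩)
  exact le_trans (card_le_card hsub) (card_union_le _ _)

lemma deg_le_of_sdiff' (G : SimpleGraph V) (a b : V) :
    deg G a ≤ deg G b + (symmDiff (closedNbhd G a) (closedNbhd G b)).card := by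
  rw [symmDiff_comm]; exact deg_le_of_sdiff G b a

lemma sdiff_card_triangle (A B C : Finset V) :
    (symmDiff A C).card ≤ (symmDiff A B).card + (symmDiff B C).card :=
  le_trans (card_le_card (symmDiff_triangle A B C)) (card_union_le _ _)

lemma heavy_closedNbhd_eq {β lam : ℝ} {G : SimpleGraph V} {a : V} (h : Heavy β lam G a) :
    closedNbhd (sparsified β lam G) a = closedNbhd (agreeGraph β G) a := by
  unfold closedNbhd
  congr 1
  ext x
  simp only [SimpleGraph.mem_neighborFinset]
  constructor
  · exact fun hx => hx.1
  · exact fun hx => ⟨hx, Or.inl h⟩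

lemma heavy_loss {β lam : ℝ} {G : SimpleGraph V} {a : V} (h : Heavy β lam G a) :
    ((closedNbhd G a \ closedNbhd (sparsified β lam G) a).card : ℝ) ≤ lam * deg G a := by
  rw [heavy_closedNbhd_eq h]
  have hsub : closedNbhd (agreeGraph β G) a ⊆ closedNbhd G a :=
    closedNbhd_subset (H := agreeGraph β G) (fun x y hxy => hxy.1) a
  rw [card_sdiff_of_subset hsub]
  have hle : deg (agreeGraph β G) a ≤ deg G a := card_le_card hsub
  unfold Heavy Light at h
  push_neg at h
  have heq : #(closedNbhd G a) - #(closedNbhd (agreeGraph β G) a)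
      = deg G a - deg (agreeGraph β G) a := rfl
  rw [heq, Nat.cast_sub hle]
  exact h

lemma dist_le_two_of_common {S : SimpleGraph V} {u v : V}
    (h : ((closedNbhd S u) ∩ (closedNbhd S v)).Nonempty) : S.dist u v ≤ 2 := by
  obtain ⟨x, hx⟩ := h
  obtain ⟨hxu, hxv⟩ := mem_inter.mp hx
  rw [mem_closedNbhd] at hxu hxv
  rcases hxu with rfl | hadj1
  · rcases hxv with rfl | hadj2
    · simp [SimpleGraph.dist_self]
    · calc S.dist x v ≤ (hadj2.symm.toWalk).length := SimpleGraph.dist_le _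
        _ ≤ 2 := by simp
  · rcases hxv with rfl | hadj2
    · calc S.dist u x ≤ (hadj1.toWalk).length := SimpleGraph.dist_le _
        _ ≤ 2 := by simp
    · calc S.dist u v ≤ (SimpleGraph.Walk.cons hadj1 hadj2.symm.toWalk).length :=
          SimpleGraph.dist_le _
        _ ≤ 2 := by simp

lemma dist_le_two_of_small_sdiff {β lam : ℝ} {G : SimpleGraph V} {u v : V}
    (hu : Heavy β lam G u) (hv : Heavy β lam G v)
    (hS : ((symmDiff (closedNbhd G u) (closedNbhd G v)).card : ℝ)
        + lam * deg G u + lam * deg G v < max (deg G u : ℝ) (deg G v : ℝ)) :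
    (sparsified β lam G).dist u v ≤ 2 := by
  have hsubu : closedNbhd (sparsified β lam G) u ⊆ closedNbhd G u :=
    closedNbhd_subset (H := sparsified β lam G) (fun x y hxy => hxy.1.1) u
  have hsubv : closedNbhd (sparsified β lam G) v ⊆ closedNbhd G v :=
    closedNbhd_subset (H := sparsified β lam G) (fun x y hxy => hxy.1.1) v
  apply dist_le_two_of_common
  rw [← Finset.card_pos]
  have hcover : (closedNbhd G u ∩ closedNbhd G v) ⊆
      (closedNbhd (sparsified β lam G) u ∩ closedNbhd (sparsified β lam G) v)
        ∪ (closedNbhd G u \ closedNbhd (sparsified β lam G) u)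
        ∪ (closedNbhd G v \ closedNbhd (sparsified β lam G) v) := by
    intro x hx
    obtain ⟨hxu, hxv⟩ := mem_inter.mp hx
    by_cases h1 : x ∈ closedNbhd (sparsified β lam G) u
    · by_cases h2 : x ∈ closedNbhd (sparsified β lam G) v
      · exact mem_union_left _ (mem_union_left _ (mem_inter.mpr ⟨h1, h2⟩))
      · exact mem_union_right _ (mem_sdiff.mpr ⟨hxv, h2⟩)
    · exact mem_union_left _ (mem_union_right _ (mem_sdiff.mpr ⟨hxu, h1⟩))
  have hI : deg G u ≤ (closedNbhd G u ∩ closedNbhd G v).card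
      + (symmDiff (closedNbhd G u) (closedNbhd G v)).card := by
    have hsub : closedNbhd G u ⊆ (closedNbhd G u ∩ closedNbhd G v)
        ∪ symmDiff (closedNbhd G u) (closedNbhd G v) := by
      intro x hx
      by_cases h : x ∈ closedNbhd G v
      · exact mem_union_left _ (mem_inter.mpr ⟨hx, h⟩)
      · exact mem_union_right _ (by rw [Finset.mem_symmDiff]; left; exact ⟨hx, h⟩)
    exact le_trans (card_le_card hsub) (card_union_le _ _)
  have hI' : deg G v ≤ (closedNbhd G u ∩ closedNbhd G v).card
      + (symmDiff (closedNbhd G u) (closedNbhd G v)).card := by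
    have hsub : closedNbhd G v ⊆ (closedNbhd G u ∩ closedNbhd G v)
        ∪ symmDiff (closedNbhd G u) (closedNbhd G v) := by
      intro x hx
      by_cases h : x ∈ closedNbhd G u
      · exact mem_union_left _ (mem_inter.mpr ⟨h, hx⟩)
      · exact mem_union_right _ (by rw [Finset.mem_symmDiff]; right; exact ⟨hx, h⟩)
    exact le_trans (card_le_card hsub) (card_union_le _ _)
  have hcard := le_trans (card_le_card hcover)
    (le_trans (card_union_le _ _) (add_le_add_left (card_union_le _ _) _))
  have hlu := heavy_loss hu
  have hlv := heavy_loss hv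
  have hmax : max (deg G u : ℝ) (deg G v : ℝ) ≤
      ((closedNbhd G u ∩ closedNbhd G v).card : ℝ)
        + (symmDiff (closedNbhd G u) (closedNbhd G v)).card := by
    rw [max_le_iff]
    constructor
    · exact_mod_cast hI
    · exact_mod_cast hI'
  have hcard' : ((closedNbhd G u ∩ closedNbhd G v).card : ℝ) ≤
      ((closedNbhd (sparsified β lam G) u ∩ closedNbhd (sparsified β lam G) v).card : ℝ)
        + ((closedNbhd G u \ closedNbhd (sparsified β lam G) u).card : ℝ)
        + ((closedNbhd G v \ closedNbhd (sparsified β lam G) v).card : ℝ) := by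
    exact_mod_cast hcard
  have hfin : (0:ℝ) <
      ((closedNbhd (sparsified β lam G) u ∩ closedNbhd (sparsified β lam G) v).card : ℝ) := by
    linarith
  exact_mod_cast hfin

/-- From an agreement edge: `s < β (d_left + s)` and `s < β (d_right + s)`. -/
lemma agree_bounds {β : ℝ} {G : SimpleGraph V} {a b : V} (hβ0 : 0 < β)
    (h : Agree β G a b) :
    ((symmDiff (closedNbhd G a) (closedNbhd G b)).card : ℝ)
        < β * ((deg G a : ℝ) + (symmDiff (closedNbhd G a) (closedNbhd G b)).card)
      ∧ ((symmDiff (closedNbhd G a) (closedNbhd G b)).card : ℝ)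
        < β * ((deg G b : ℝ) + (symmDiff (closedNbhd G a) (closedNbhd G b)).card) := by
  have h1 : (deg G b : ℝ) ≤ (deg G a : ℝ)
      + (symmDiff (closedNbhd G a) (closedNbhd G b)).card := by
    exact_mod_cast deg_le_of_sdiff G a b
  have h2 : (deg G a : ℝ) ≤ (deg G b : ℝ)
      + (symmDiff (closedNbhd G a) (closedNbhd G b)).card := by
    exact_mod_cast deg_le_of_sdiff' G a b
  have hs : (0:ℝ) ≤ ((symmDiff (closedNbhd G a) (closedNbhd G b)).card : ℝ) := by positivity
  constructor
  · refine lt_of_lt_of_le h (mul_le_mul_of_nonneg_left ?_ hβ0.le)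
    exact max_le (by linarith) h1
  · refine lt_of_lt_of_le h (mul_le_mul_of_nonneg_left ?_ hβ0.le)
    exact max_le h2 (by linarith)

lemma chain3 {β lam : ℝ} {G : SimpleGraph V} {u a b v : V}
    (hβ0 : 0 < β) (hβ : β < 1/20) (hlam0 : 0 < lam) (hparams : 5*β + 2*lam < 1)
    (h0 : Agree β G u a) (h1 : Agree β G a b) (h2 : Agree β G b v) :
    ((symmDiff (closedNbhd G u) (closedNbhd G v)).card : ℝ)
      + lam * deg G u + lam * deg G v < max (deg G u : ℝ) (deg G v : ℝ) := by
  have hT : ((symmDiff (closedNbhd G u) (closedNbhd G v)).card : ℝ)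
      ≤ ((symmDiff (closedNbhd G u) (closedNbhd G a)).card : ℝ)
        + ((symmDiff (closedNbhd G a) (closedNbhd G b)).card : ℝ)
        + ((symmDiff (closedNbhd G b) (closedNbhd G v)).card : ℝ) := by
    have t1 := sdiff_card_triangle (closedNbhd G u) (closedNbhd G a) (closedNbhd G v)
    have t2 := sdiff_card_triangle (closedNbhd G a) (closedNbhd G b) (closedNbhd G v)
    have h : (symmDiff (closedNbhd G u) (closedNbhd G v)).card
        ≤ (symmDiff (closedNbhd G u) (closedNbhd G a)).card
          + (symmDiff (closedNbhd G a) (closedNbhd G b)).card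
          + (symmDiff (closedNbhd G b) (closedNbhd G v)).card := by omega
    exact_mod_cast h
  have b0 := (agree_bounds hβ0 h0).1
  have b1 := (agree_bounds hβ0 h1).1
  have b2 := (agree_bounds hβ0 h2).2
  have hda : (deg G a : ℝ) ≤ (deg G u : ℝ)
      + ((symmDiff (closedNbhd G u) (closedNbhd G a)).card : ℝ) := by
    exact_mod_cast deg_le_of_sdiff G u a
  have hdu1 : (1:ℝ) ≤ (deg G u : ℝ) := by exact_mod_cast one_le_deg G u
  have hdv1 : (1:ℝ) ≤ (deg G v : ℝ) := by exact_mod_cast one_le_deg G v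
  set s0 := ((symmDiff (closedNbhd G u) (closedNbhd G a)).card : ℝ)
  set s1 := ((symmDiff (closedNbhd G a) (closedNbhd G b)).card : ℝ)
  set s2 := ((symmDiff (closedNbhd G b) (closedNbhd G v)).card : ℝ)
  set sT := ((symmDiff (closedNbhd G u) (closedNbhd G v)).card : ℝ)
  set du := (deg G u : ℝ); set da := (deg G a : ℝ); set dv := (deg G v : ℝ)
  set m := max du dv with hmdef
  have hs0 : (0:ℝ) ≤ s0 := by positivity
  have hs1 : (0:ℝ) ≤ s1 := by positivity
  have hs2 : (0:ℝ) ≤ s2 := by positivity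
  have hdum : du ≤ m := le_max_left _ _
  have hdvm : dv ≤ m := le_max_right _ _
  have hm1 : (1:ℝ) ≤ m := le_trans hdu1 hdum
  have hq : (0:ℝ) ≤ 1/20 - β := by linarith
  have e0 : s0 < (20/19)*β*du := by nlinarith [mul_nonneg hs0 hq]
  have e1 : s1 < (20/19)*β*da := by nlinarith [mul_nonneg hs1 hq]
  have e2 : s2 < (20/19)*β*dv := by nlinarith [mul_nonneg hs2 hq]
  have e1' : s1 < (20/19)*β*du + (1/19)*s0 := by nlinarith [mul_nonneg hs0 hq]
  have p1 : (0:ℝ) ≤ β*(m - du) := mul_nonneg hβ0.le (by linarith)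
  have p2 : (0:ℝ) ≤ β*(m - dv) := mul_nonneg hβ0.le (by linarith)
  have p3 : (0:ℝ) ≤ lam*(m - du) := mul_nonneg hlam0.le (by linarith)
  have p4 : (0:ℝ) ≤ lam*(m - dv) := mul_nonneg hlam0.le (by linarith)
  have p5 : (0:ℝ) < m*(1 - (5*β+2*lam)) := mul_pos (by linarith) (by linarith)
  have p6 : (0:ℝ) ≤ β*m := mul_nonneg hβ0.le (by linarith)
  nlinarith [hT, e0, e1', e2, p1, p2, p3, p4, p5, p6]

lemma chain4 {β lam : ℝ} {G : SimpleGraph V} {u a b c v : V}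
    (hβ0 : 0 < β) (hβ : β < 1/20) (hlam0 : 0 < lam) (hparams : 5*β + 2*lam < 1)
    (h0 : Agree β G u a) (h1 : Agree β G a b) (h2 : Agree β G b c) (h3 : Agree β G c v) :
    ((symmDiff (closedNbhd G u) (closedNbhd G v)).card : ℝ)
      + lam * deg G u + lam * deg G v < max (deg G u : ℝ) (deg G v : ℝ) := by
  have hT : ((symmDiff (closedNbhd G u) (closedNbhd G v)).card : ℝ)
      ≤ ((symmDiff (closedNbhd G u) (closedNbhd G a)).card : ℝ)
        + ((symmDiff (closedNbhd G a) (closedNbhd G b)).card : ℝ)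
        + ((symmDiff (closedNbhd G b) (closedNbhd G c)).card : ℝ)
        + ((symmDiff (closedNbhd G c) (closedNbhd G v)).card : ℝ) := by
    have t1 := sdiff_card_triangle (closedNbhd G u) (closedNbhd G a) (closedNbhd G v)
    have t2 := sdiff_card_triangle (closedNbhd G a) (closedNbhd G b) (closedNbhd G v)
    have t3 := sdiff_card_triangle (closedNbhd G b) (closedNbhd G c) (closedNbhd G v)
    have h : (symmDiff (closedNbhd G u) (closedNbhd G v)).card
        ≤ (symmDiff (closedNbhd G u) (closedNbhd G a)).card
          + (symmDiff (closedNbhd G a) (closedNbhd G b)).card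
          + (symmDiff (closedNbhd G b) (closedNbhd G c)).card
          + (symmDiff (closedNbhd G c) (closedNbhd G v)).card := by omega
    exact_mod_cast h
  have b0 := (agree_bounds hβ0 h0).1
  have b1 := (agree_bounds hβ0 h1).1
  have b2 := (agree_bounds hβ0 h2).2
  have b3 := (agree_bounds hβ0 h3).2
  have hda : (deg G a : ℝ) ≤ (deg G u : ℝ)
      + ((symmDiff (closedNbhd G u) (closedNbhd G a)).card : ℝ) := by
    exact_mod_cast deg_le_of_sdiff G u a
  have hdc : (deg G c : ℝ) ≤ (deg G v : ℝ)
      + ((symmDiff (closedNbhd G c) (closedNbhd G v)).card : ℝ) := by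
    exact_mod_cast deg_le_of_sdiff' G c v
  have hdu1 : (1:ℝ) ≤ (deg G u : ℝ) := by exact_mod_cast one_le_deg G u
  have hdv1 : (1:ℝ) ≤ (deg G v : ℝ) := by exact_mod_cast one_le_deg G v
  set s0 := ((symmDiff (closedNbhd G u) (closedNbhd G a)).card : ℝ)
  set s1 := ((symmDiff (closedNbhd G a) (closedNbhd G b)).card : ℝ)
  set s2 := ((symmDiff (closedNbhd G b) (closedNbhd G c)).card : ℝ)
  set s3 := ((symmDiff (closedNbhd G c) (closedNbhd G v)).card : ℝ)
  set sT := ((symmDiff (closedNbhd G u) (closedNbhd G v)).card : ℝ)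
  set du := (deg G u : ℝ); set da := (deg G a : ℝ); set dc := (deg G c : ℝ)
  set dv := (deg G v : ℝ)
  set m := max du dv with hmdef
  have hs0 : (0:ℝ) ≤ s0 := by positivity
  have hs1 : (0:ℝ) ≤ s1 := by positivity
  have hs2 : (0:ℝ) ≤ s2 := by positivity
  have hs3 : (0:ℝ) ≤ s3 := by positivity
  have hdum : du ≤ m := le_max_left _ _
  have hdvm : dv ≤ m := le_max_right _ _
  have hm1 : (1:ℝ) ≤ m := le_trans hdu1 hdum
  have hq : (0:ℝ) ≤ 1/20 - β := by linarith
  have e0 : s0 < (20/19)*β*du := by nlinarith [mul_nonneg hs0 hq]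
  have e3 : s3 < (20/19)*β*dv := by nlinarith [mul_nonneg hs3 hq]
  have e1 : s1 < (20/19)*β*da := by nlinarith [mul_nonneg hs1 hq]
  have e2 : s2 < (20/19)*β*dc := by nlinarith [mul_nonneg hs2 hq]
  have e1' : s1 < (20/19)*β*du + (1/19)*s0 := by nlinarith [mul_nonneg hs0 hq]
  have e2' : s2 < (20/19)*β*dv + (1/19)*s3 := by nlinarith [mul_nonneg hs3 hq]
  have p1 : (0:ℝ) ≤ β*(m - du) := mul_nonneg hβ0.le (by linarith)
  have p2 : (0:ℝ) ≤ β*(m - dv) := mul_nonneg hβ0.le (by linarith)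
  have p3 : (0:ℝ) ≤ lam*(m - du) := mul_nonneg hlam0.le (by linarith)
  have p4 : (0:ℝ) ≤ lam*(m - dv) := mul_nonneg hlam0.le (by linarith)
  have p5 : (0:ℝ) < m*(1 - (5*β+2*lam)) := mul_pos (by linarith) (by linarith)
  have p6 : (0:ℝ) ≤ β*m := mul_nonneg hβ0.le (by linarith)
  nlinarith [hT, e0, e1', e2', e3, p1, p2, p3, p4, p5, p6]

lemma sparsified_agree {β lam : ℝ} {G : SimpleGraph V} {a b : V}
    (h : (sparsified β lam G).Adj a b) : Agree β G a b := h.1.2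

lemma sparsified_heavy {β lam : ℝ} {G : SimpleGraph V} {a b : V}
    (h : (sparsified β lam G).Adj a b) : Heavy β lam G a ∨ Heavy β lam G b := h.2

/-- if `5β + 2λ < 1`, `β < 1/20`, and `u`, `v` are heavy vertices
in the same connected component of the sparsified graph `G̃`, then
`dist_{G̃}(u,v) ≤ 2`. -/
theorem stmt4 (G : SimpleGraph V) (β lam : ℝ)
    (hβ0 : 0 < β) (hβ : β < 1 / 20) (hlam0 : 0 < lam)
    (hparams : 5 * β + 2 * lam < 1)
    (u v : V)
    (hu : Heavy β lam G u) (hv : Heavy β lam G v)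
    (hreach : (sparsified β lam G).Reachable u v) :
    (sparsified β lam G).dist u v ≤ 2 := by
  have hβ' : β < 1/20 := by linarith
  have hparams' : 5*β + 2*lam < 1 := by linarith
  suffices H : ∀ n : ℕ, ∀ u v : V, Heavy β lam G u → Heavy β lam G v →
      (sparsified β lam G).Reachable u v → (sparsified β lam G).dist u v ≤ n →
      (sparsified β lam G).dist u v ≤ 2 by
    exact H ((sparsified β lam G).dist u v) u v hu hv hreach le_rfl
  clear hu hv hreach u v
  intro n
  induction n with
  | zero => intro u v _ _ _ h; omega
  | succ n ih =>
    intro u v hu hv hreach hd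
    by_cases h2 : (sparsified β lam G).dist u v ≤ 2
    · exact h2
    push_neg at h2
    obtain ⟨p, hp⟩ := hreach.exists_walk_length_eq_dist
    rcases p with _ | @⟨_, a, _, h01, p1⟩
    · simp only [SimpleGraph.Walk.length_nil] at hp; omega
    rcases p1 with _ | @⟨_, b, _, h12, p2⟩
    · simp only [SimpleGraph.Walk.length_cons, SimpleGraph.Walk.length_nil] at hp; omega
    rcases p2 with _ | @⟨_, c, _, h23, p3⟩
    · simp only [SimpleGraph.Walk.length_cons, SimpleGraph.Walk.length_nil] at hp; omega
    rcases p3 with _ | @⟨_, d, _, h34, p4⟩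
    · -- length 3
      exact absurd (dist_le_two_of_small_sdiff hu hv
        (chain3 hβ0 hβ' hlam0 hparams' (sparsified_agree h01) (sparsified_agree h12)
          (sparsified_agree h23))) (by omega)
    rcases p4 with _ | @⟨_, e, _, h45, p5⟩
    · -- length 4
      exact absurd (dist_le_two_of_small_sdiff hu hv
        (chain4 hβ0 hβ' hlam0 hparams' (sparsified_agree h01) (sparsified_agree h12)
          (sparsified_agree h23) (sparsified_agree h34))) (by omega)
    · -- length ≥ 5
      simp only [SimpleGraph.Walk.length_cons] at hp
      rcases sparsified_heavy h12 with ha | hb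
      · -- a is heavy
        have hdav : (sparsified β lam G).dist a v ≤ n := by
          have h := SimpleGraph.dist_le (SimpleGraph.Walk.cons h12 (SimpleGraph.Walk.cons h23
            (SimpleGraph.Walk.cons h34 (SimpleGraph.Walk.cons h45 p5))))
          simp only [SimpleGraph.Walk.length_cons] at h
          omega
        have hra : (sparsified β lam G).Reachable a v :=
          ⟨SimpleGraph.Walk.cons h12 (SimpleGraph.Walk.cons h23
            (SimpleGraph.Walk.cons h34 (SimpleGraph.Walk.cons h45 p5)))⟩
        have h2' := ih a v ha hv hra hdav
        obtain ⟨q, hq⟩ := hra.exists_walk_length_eq_dist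
        have := SimpleGraph.dist_le (SimpleGraph.Walk.cons h01 q)
        simp only [SimpleGraph.Walk.length_cons] at this
        omega
      · -- b is heavy
        have hdbv : (sparsified β lam G).dist b v ≤ n := by
          have h := SimpleGraph.dist_le (SimpleGraph.Walk.cons h23
            (SimpleGraph.Walk.cons h34 (SimpleGraph.Walk.cons h45 p5)))
          simp only [SimpleGraph.Walk.length_cons] at h
          omega
        have hrb : (sparsified β lam G).Reachable b v :=
          ⟨SimpleGraph.Walk.cons h23 (SimpleGraph.Walk.cons h34 (SimpleGraph.Walk.cons h45 p5))⟩
        have h2' := ih b v hb hv hrb hdbv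
        obtain ⟨q, hq⟩ := hrb.exists_walk_length_eq_dist
        have := SimpleGraph.dist_le (SimpleGraph.Walk.cons h01 (SimpleGraph.Walk.cons h12 q))
        simp only [SimpleGraph.Walk.length_cons] at this
        omega

end
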